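/- Let 𝔽 be a field, 𝓢 ⊆ 2^[n] a Sperner family and h : 𝓢 → 2^[n] a function with h(S) ⊆ S for every S ∈ 𝓢. Then the set of common zeros in 𝔽^n of the polynomial system 𝔾(𝓢,h) = {f_{S,h(S)} : S ∈ 𝓢} ∪ {x_i² − x_i : i ∈ [n]} is exactly {v_F : F ∈ 𝓕(𝓢,h)}, the set of characteristic vectors of the members of 𝓕(𝓢,h). -/
import Mathlib


open Finset

/-- A Sperner family: no member contains another member. -/
def IsSperner {n : ℕ} (𝓢 : Finset (Finset (Fin n))) : Prop :=
  ∀ S ∈ 𝓢, ∀ S' ∈ 𝓢, S ⊆ S' → S = S'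

/-- `Q S H = {T ⊆ [n] : T ∩ S = H}`. -/
def Q {n : ℕ} (S H : Finset (Fin n)) : Finset (Finset (Fin n)) :=
  Finset.univ.filter fun T => T ∩ S = H

/-- `𝓕(𝓢,h) = 2^[n] \\ ⋃_{S ∈ 𝓢} Q_{S,h(S)}`. -/
def FFam {n : ℕ} (𝓢 : Finset (Finset (Fin n))) (h : Finset (Fin n) → Finset (Fin n)) :
    Finset (Finset (Fin n)) :=
  Finset.univ \ 𝓢.biUnion fun S => Q S (h S)

/-- `f_{S,H} = (∏_{i∈H} xᵢ)·(∏_{i∈S\\H} (xᵢ − 1))`. -/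
noncomputable def fPoly (𝔽 : Type*) [Field 𝔽] {n : ℕ} (S H : Finset (Fin n)) : MvPolynomial (Fin n) 𝔽 :=
  (∏ i ∈ H, MvPolynomial.X i) * ∏ i ∈ S \ H, (MvPolynomial.X i - 1)

/-- The characteristic vector of `F ⊆ [n]`. -/
def charVec (𝔽 : Type*) [Field 𝔽] {n : ℕ} (F : Finset (Fin n)) : Fin n → 𝔽 :=
  fun i => if i ∈ F then 1 else 0

lemma eval_fPoly_ne_zero (𝔽 : Type*) [Field 𝔽] {n : ℕ} (F S H : Finset (Fin n)) (hHS : H ⊆ S) :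
    MvPolynomial.eval (charVec 𝔽 F) (fPoly 𝔽 S H) ≠ 0 ↔ F ∩ S = H := by
  simp only [fPoly, map_mul, MvPolynomial.eval_prod, MvPolynomial.eval_X, map_sub,
    map_one]
  rw [mul_ne_zero_iff, Finset.prod_ne_zero_iff, Finset.prod_ne_zero_iff]
  constructor
  · rintro ⟨h1, h2⟩
    ext i
    simp only [mem_inter]
    constructor
    · rintro ⟨hiF, hiS⟩
      by_contra hiH
      have := h2 i (Finset.mem_sdiff.mpr ⟨hiS, hiH⟩)
      simp [charVec, hiF] at this
    · intro hiH
      refine ⟨?_, hHS hiH⟩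
      by_contra hiF
      have := h1 i hiH
      simp [charVec, hiF] at this
  · intro hFS
    constructor
    · intro i hi
      have : i ∈ F := by
        have : i ∈ F ∩ S := hFS ▸ hi
        exact (mem_inter.mp this).1
      simp [charVec, this]
    · intro i hi
      rw [mem_sdiff] at hi
      have : i ∉ F := fun hF => hi.2 (by
        have : i ∈ F ∩ S := mem_inter.mpr ⟨hF, hi.1⟩
        rw [hFS] at this; exact this)
      simp [charVec, this]

/-- The set of common zeros of `𝔾(𝓢,h)` is exactly the set of characteristic
vectors of the members of `𝓕(𝓢,h)`. -/
theorem stmt_18 (𝔽 : Type*) [Field 𝔽] {n : ℕ} (𝓢 : Finset (Finset (Fin n)))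
    (h : Finset (Fin n) → Finset (Fin n))
    (hSperner : IsSperner 𝓢) (hsub : ∀ S ∈ 𝓢, h S ⊆ S) :
    {x : Fin n → 𝔽 | (∀ S ∈ 𝓢, MvPolynomial.eval x (fPoly 𝔽 S (h S)) = 0) ∧
        ∀ i : Fin n, MvPolynomial.eval x (MvPolynomial.X i ^ 2 - MvPolynomial.X i) = 0} =
      charVec 𝔽 '' (FFam 𝓢 h : Set (Finset (Fin n))) := by
  ext x
  simp only [Set.mem_setOf_eq, Set.mem_image, Finset.mem_coe]
  constructor
  · rintro ⟨h1, h2⟩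
    classical
    have hx01 : ∀ i, x i = 0 ∨ x i = 1 := by
      intro i
      have := h2 i
      simp only [map_sub, map_pow, MvPolynomial.eval_X] at this
      have : x i * (x i - 1) = 0 := by ring_nf; linear_combination this
      rcases mul_eq_zero.mp this with h | h
      · exact Or.inl h
      · exact Or.inr (sub_eq_zero.mp h)
    set F : Finset (Fin n) := Finset.univ.filter (fun i => x i = 1) with hF
    have hx : x = charVec 𝔽 F := by
      funext i
      simp only [charVec, hF, mem_filter, mem_univ, true_and]
      rcases hx01 i with h0 | h1'
      · rw [if_neg (by simp [h0]), h0]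
      · rw [if_pos h1', h1']
    refine ⟨F, ?_, hx.symm⟩
    simp only [FFam, mem_sdiff, mem_univ, true_and]
    intro hmem
    rw [Finset.mem_biUnion] at hmem
    obtain ⟨S, hS, hQ⟩ := hmem
    simp only [Q, mem_filter, mem_univ, true_and] at hQ
    have := (eval_fPoly_ne_zero 𝔽 F S (h S) (hsub S hS)).mpr hQ
    exact this (hx ▸ h1 S hS)
  · rintro ⟨F, hF, rfl⟩
    constructor
    · intro S hS
      by_contra hne
      have hFS := (eval_fPoly_ne_zero 𝔽 F S (h S) (hsub S hS)).mp hne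
      simp only [FFam, mem_sdiff, mem_univ, true_and, Finset.mem_biUnion] at hF
      exact hF ⟨S, hS, by simp [Q, hFS]⟩
    · intro i
      simp only [map_sub, map_pow, MvPolynomial.eval_X, charVec]
      by_cases hi : i ∈ F <;> simp [hi]
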